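/- Let G be a finite group, S ∈ Syl_p(G) a Sylow p-subgroup. Then the category F_S(G), whose objects are the subgroups of S and whose morphisms Hom(P,Q) are the group homomorphisms P → Q induced by conjugation by elements of G (i.e., maps x ↦ gxg^{-1} for g with gPg^{-1} ≤ Q), is a saturated fusion system over S. -/

import Mathlib

open Subgroup
open Pointwise

variable {G : Type} [Group G]

/-- The conjugate `gPg⁻¹` of a subgroup. -/
def conjSub (g : G) (P : Subgroup G) : Subgroup G :=
  P.map (MulAut.conj g).toMonoidHom

/-- A homomorphism `P →* Q` belongs to `Hom_{F_S(G)}(P,Q)` iff it is induced by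
conjugation by some element of `G`. -/
def IsFusionMor {G : Type} [Group G] (P Q : Subgroup G) (φ : ↥P →* ↥Q) : Prop :=
  ∃ g : G, ∀ x : ↥P, ((φ x : ↥Q) : G) = g * (x : G) * g⁻¹

/-- Membership in `Hom_S(P,Q)`: induced by conjugation by an element of `S`. -/
def IsSubConjMor {G : Type} [Group G] (S P Q : Subgroup G) (φ : ↥P →* ↥Q) : Prop :=
  ∃ g ∈ S, ∀ x : ↥P, ((φ x : ↥Q) : G) = g * (x : G) * g⁻¹

/-- Two subgroups are `F_S(G)`-conjugate iff they are conjugate in `G`. -/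
def IsFConj {G : Type} [Group G] (P Q : Subgroup G) : Prop :=
  ∃ g : G, conjSub g P = Q

/-- `P` is fully centralized in `F_S(G)`. -/
def FullyCentralized {G : Type} [Group G] (S P : Subgroup G) : Prop :=
  ∀ Q : Subgroup G, Q ≤ S → IsFConj P Q →
    Nat.card ↥(Subgroup.centralizer (Q : Set G) ⊓ S) ≤
      Nat.card ↥(Subgroup.centralizer (P : Set G) ⊓ S)

/-- `P` is fully normalized in `F_S(G)`. -/
def FullyNormalized {G : Type} [Group G] (S P : Subgroup G) : Prop :=
  ∀ Q : Subgroup G, Q ≤ S → IsFConj P Q →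
    Nat.card ↥((Subgroup.normalizer (Q : Set G)) ⊓ S) ≤ Nat.card ↥((Subgroup.normalizer (P : Set G)) ⊓ S)

/-- The group `Aut_{F_S(G)}(P)` of automorphisms of `P` induced by conjugation in `G`. -/
def autF (P : Subgroup G) : Subgroup (MulAut ↥P) where
  carrier := {f | ∃ g : G, ∀ x : ↥P, ((f x : ↥P) : G) = g * (x : G) * g⁻¹}
  one_mem' := ⟨1, fun x => by simp⟩
  mul_mem' := by
    rintro f₁ f₂ ⟨g₁, h₁⟩ ⟨g₂, h₂⟩
    refine ⟨g₁ * g₂, fun x => ?_⟩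
    have : (f₁ * f₂) x = f₁ (f₂ x) := rfl
    rw [this, h₁ (f₂ x), h₂ x]
    group
  inv_mem' := by
    rintro f ⟨g, h⟩
    refine ⟨g⁻¹, fun x => ?_⟩
    have := h (f⁻¹ x)
    have hfx : f (f⁻¹ x) = x := by simp
    rw [hfx] at this
    rw [this]
    group

/-- The group `Aut_S(P)` of automorphisms of `P` induced by conjugation by elements of `S`. -/
def autS (S P : Subgroup G) : Subgroup (MulAut ↥P) where
  carrier := {f | ∃ g ∈ S, ∀ x : ↥P, ((f x : ↥P) : G) = g * (x : G) * g⁻¹}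
  one_mem' := ⟨1, S.one_mem, fun x => by simp⟩
  mul_mem' := by
    rintro f₁ f₂ ⟨g₁, hg₁, h₁⟩ ⟨g₂, hg₂, h₂⟩
    refine ⟨g₁ * g₂, S.mul_mem hg₁ hg₂, fun x => ?_⟩
    have : (f₁ * f₂) x = f₁ (f₂ x) := rfl
    rw [this, h₁ (f₂ x), h₂ x]
    group
  inv_mem' := by
    rintro f ⟨g, hg, h⟩
    refine ⟨g⁻¹, S.inv_mem hg, fun x => ?_⟩
    have := h (f⁻¹ x)
    have hfx : f (f⁻¹ x) = x := by simp
    rw [hfx] at this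
    rw [this]
    group

/-- The subset `N_φ ⊆ N_S(P)` appearing in the extension axiom, for the morphism
`φ = c_g : P → S`. -/
def Nphi (S P : Subgroup G) (g : G) : Set G :=
  {n | n ∈ S ⊓ (Subgroup.normalizer (P : Set G)) ∧
    ∃ s ∈ S, ∀ x ∈ P, g * (n * x * n⁻¹) * g⁻¹ = s * (g * x * g⁻¹) * s⁻¹}

lemma mem_conjSub {g y : G} {P : Subgroup G} : y ∈ conjSub g P ↔ ∃ x ∈ P, g * x * g⁻¹ = y := by
  simp [conjSub, Subgroup.mem_map, MulAut.conj]

lemma conjSub_mem {g x : G} {P : Subgroup G} (hx : x ∈ P) : g * x * g⁻¹ ∈ conjSub g P :=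
  mem_conjSub.2 ⟨x, hx, rfl⟩

lemma conjSub_conjSub (g h : G) (P : Subgroup G) : conjSub g (conjSub h P) = conjSub (g * h) P := by
  ext y
  simp only [mem_conjSub]
  constructor
  · rintro ⟨x, ⟨z, hz, rfl⟩, rfl⟩
    exact ⟨z, hz, by group⟩
  · rintro ⟨z, hz, rfl⟩
    exact ⟨h * z * h⁻¹, ⟨z, hz, rfl⟩, by group⟩

@[simp] lemma conjSub_one (P : Subgroup G) : conjSub 1 P = P := by
  ext y; simp [mem_conjSub]

lemma conjSub_inv_conjSub (g : G) (P : Subgroup G) : conjSub g⁻¹ (conjSub g P) = P := by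
  rw [conjSub_conjSub, inv_mul_cancel, conjSub_one]

lemma conjSub_mono {g : G} {P Q : Subgroup G} (h : P ≤ Q) : conjSub g P ≤ conjSub g Q :=
  Subgroup.map_mono h

lemma card_conjSub (g : G) (P : Subgroup G) : Nat.card (conjSub g P) = Nat.card P :=
  (Nat.card_congr (P.equivMapOfInjective _ (MulAut.conj g).injective).toEquiv).symm

lemma normalizer_conjSub (g : G) (P : Subgroup G) :
    Subgroup.normalizer ((conjSub g P : Subgroup G) : Set G) = conjSub g (Subgroup.normalizer (P : Set G)) :=
  (Subgroup.map_equiv_normalizer_eq P (MulAut.conj g)).symm ▸ rfl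

lemma isPGroup_conjSub {p : ℕ} {g : G} {P : Subgroup G} (h : IsPGroup p P) :
    IsPGroup p (conjSub g P) :=
  h.map _

lemma centralizer_conjSub (g : G) (P : Subgroup G) :
    Subgroup.centralizer ((conjSub g P : Subgroup G) : Set G)
      = conjSub g (Subgroup.centralizer (P : Set G)) := by
  ext y
  simp only [mem_conjSub, mem_centralizer_iff, SetLike.mem_coe]
  constructor
  · intro h
    refine ⟨g⁻¹ * y * g, fun z hz => ?_, by group⟩
    have h1 : g * z * g⁻¹ * y = y * (g * z * g⁻¹) := h _ (conjSub_mem hz)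
    calc z * (g⁻¹ * y * g) = g⁻¹ * (g * z * g⁻¹ * y) * g := by group
    _ = g⁻¹ * (y * (g * z * g⁻¹)) * g := by rw [h1]
    _ = g⁻¹ * y * g * z := by group
  · rintro ⟨x, hx, rfl⟩ h hh
    obtain ⟨z, hz, rfl⟩ := mem_conjSub.1 hh
    have h1 : z * x = x * z := hx z hz
    calc g * z * g⁻¹ * (g * x * g⁻¹) = g * (z * x) * g⁻¹ := by group
    _ = g * (x * z) * g⁻¹ := by rw [h1]
    _ = g * x * g⁻¹ * (g * z * g⁻¹) := by group

lemma mem_normalizer_of_conj [Finite G] {s : G} {Q : Subgroup G}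
    (h : ∀ q ∈ Q, s * q * s⁻¹ ∈ Q) : s ∈ (Subgroup.normalizer (Q : Set G)) := by
  have hle : conjSub s Q ≤ Q := by
    rintro y hy
    obtain ⟨x, hx, rfl⟩ := mem_conjSub.1 hy
    exact h x hx
  have heq : conjSub s Q = Q :=
    Subgroup.eq_of_le_of_card_ge hle (le_of_eq (card_conjSub s Q).symm)
  rw [Subgroup.mem_normalizer_iff]
  intro q
  constructor
  · intro hq; exact h q hq
  · intro hq
    rw [← heq] at hq
    obtain ⟨x, hx, hxx⟩ := mem_conjSub.1 hq
    have : x = q := by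
      have := mul_left_cancel ((mul_right_cancel hxx : s * x = s * q))
      exact this
    exact this ▸ hx

lemma centralizer_le_normalizer' (Q : Subgroup G) :
    Subgroup.centralizer (Q : Set G) ≤ (Subgroup.normalizer (Q : Set G)) := by
  intro c hc
  rw [Subgroup.mem_normalizer_iff]
  rw [mem_centralizer_iff] at hc
  intro q
  constructor
  · intro hq
    have h1 : q * c = c * q := hc q hq
    have h3 : c * q * c⁻¹ = q := by rw [show c * q = q * c from h1.symm]; group
    rw [h3]; exact hq
  · intro hq
    have h1 : (c * q * c⁻¹) * c = c * (c * q * c⁻¹) := hc _ hq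
    have h2 : c * q = c * (c * q * c⁻¹) := by
      calc c * q = (c * q * c⁻¹) * c := by group
      _ = c * (c * q * c⁻¹) := h1
    have h3 : q = c * q * c⁻¹ := mul_left_cancel h2
    rw [h3]; exact hq



lemma mem_smul_sylow {p : ℕ} [Fact p.Prime] {g x : G} {R : Sylow p G} :
    x ∈ (g • R : Sylow p G) ↔ g⁻¹ * x * g ∈ R := by
  have : x ∈ (g • R : Sylow p G) ↔ x ∈ (MulAut.conj g • (R : Subgroup G)) := Iff.rfl
  rw [this, Subgroup.mem_pointwise_smul_iff_inv_smul_mem]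
  simp only [MulAut.smul_def, MulAut.conj_inv_apply, mul_assoc]
  exact Iff.rfl

/-- In a finite group, any `p`-subgroup can be conjugated into a `p`-subgroup of index
prime to `p`. -/
lemma exists_conj_le {Γ : Type} [Group Γ] [Finite Γ] {p : ℕ} [Fact p.Prime]
    {H X : Subgroup Γ} (hH : IsPGroup p H) (hHi : ¬ p ∣ H.index) (hX : IsPGroup p X) :
    ∃ k : Γ, ∀ x ∈ X, k * x * k⁻¹ ∈ H := by
  obtain ⟨T₂, hT₂⟩ := hH.exists_le_sylow
  have hHT₂ : H = T₂ := by
    have h1 : H.relIndex T₂ * (T₂ : Subgroup Γ).index = H.index :=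
      Subgroup.relIndex_mul_index hT₂
    have h2 : ¬ p ∣ H.relIndex T₂ := fun hd => hHi (h1 ▸ Dvd.dvd.mul_right hd _)
    obtain ⟨n, hn⟩ := IsPGroup.iff_card.mp T₂.2
    have h3 : H.relIndex T₂ ∣ p ^ n := by
      rw [← hn]
      exact Subgroup.index_dvd_card (H.subgroupOf T₂)
    have h4 : H.relIndex T₂ = 1 := by
      rcases (Nat.dvd_prime_pow Fact.out).mp h3 with ⟨i, hi, he⟩
      cases i with
      | zero => simpa using he
      | succ j => exact absurd (he ▸ dvd_pow_self p (Nat.succ_ne_zero j)) h2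
    exact le_antisymm hT₂ (Subgroup.relIndex_eq_one.mp h4)
  obtain ⟨T, hT⟩ := hX.exists_le_sylow
  obtain ⟨k, hk⟩ := MulAction.exists_smul_eq Γ T T₂
  refine ⟨k, fun x hx => ?_⟩
  have : k * x * k⁻¹ ∈ (k • T : Sylow p Γ) := by
    rw [mem_smul_sylow]
    have : k⁻¹ * (k * x * k⁻¹) * k = x := by group
    rw [this]; exact hT hx
  rw [hk] at this
  rw [hHT₂]
  exact this

lemma pow_apply_of_conj {P : Subgroup G} {f : MulAut ↥P} {s : G}
    (h : ∀ x : ↥P, ((f x : ↥P) : G) = s * x * s⁻¹) :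
    ∀ (n : ℕ) (x : ↥P), (((f ^ n) x : ↥P) : G) = s ^ n * (x : G) * (s ^ n)⁻¹ := by
  intro n
  induction n with
  | zero => intro x; simp
  | succ m ih =>
    intro x
    have h1 : (f ^ (m + 1)) x = (f ^ m) (f x) := by
      rw [pow_succ]
      rfl
    rw [h1, ih (f x), h x, pow_succ]
    group

lemma conj_mem_normalizer {P : Subgroup G} {f : MulAut ↥P} {g : G}
    (h : ∀ x : ↥P, ((f x : ↥P) : G) = g * x * g⁻¹) : g ∈ (Subgroup.normalizer (P : Set G)) := by
  rw [Subgroup.mem_normalizer_iff]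
  intro y
  constructor
  · intro hy
    have h1 := h ⟨y, hy⟩
    have : g * y * g⁻¹ = ((f ⟨y, hy⟩ : ↥P) : G) := h1.symm
    rw [this]
    exact (f ⟨y, hy⟩).2
  · intro hy
    set x : ↥P := f.symm ⟨g * y * g⁻¹, hy⟩ with hx
    have hfx : f x = ⟨g * y * g⁻¹, hy⟩ := f.apply_symm_apply _
    have h2 : g * y * g⁻¹ = g * (x : G) * g⁻¹ := by
      rw [← h x, hfx]
    have hxy : y = (x : G) := mul_left_cancel (mul_right_cancel h2)
    rw [hxy]
    exact x.2

lemma conjSub_eq_self {P : Subgroup G} {k : G} (hk : k ∈ (Subgroup.normalizer (P : Set G))) : conjSub k P = P := by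
  ext y
  rw [mem_conjSub]
  constructor
  · rintro ⟨x, hx, rfl⟩
    exact (Subgroup.mem_normalizer_iff.1 hk x).1 hx
  · intro hy
    refine ⟨k⁻¹ * y * k, ?_, by group⟩
    have := (Subgroup.mem_normalizer_iff.1 ((Subgroup.normalizer (P : Set G)).inv_mem hk) y).1 hy
    simpa using this

lemma autF_eq_range (P : Subgroup G) : autF P = P.normalizerMonoidHom.range := by
  ext f
  constructor
  · rintro ⟨g, hg⟩
    refine ⟨⟨g, conj_mem_normalizer hg⟩, ?_⟩
    ext x
    exact (hg x).symm
  · rintro ⟨n, rfl⟩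
    exact ⟨(n : G), fun x => rfl⟩

lemma autS_eq_map (S P : Subgroup G) :
    autS S P
      = Subgroup.map P.normalizerMonoidHom (((Subgroup.normalizer (P : Set G)) ⊓ S).subgroupOf (Subgroup.normalizer (P : Set G))) := by
  ext f
  constructor
  · rintro ⟨s, hs, hgs⟩
    have hsn : s ∈ (Subgroup.normalizer (P : Set G)) := conj_mem_normalizer hgs
    refine ⟨⟨s, hsn⟩, Subgroup.mem_subgroupOf.2 (Subgroup.mem_inf.2 ⟨hsn, hs⟩), ?_⟩
    ext x
    exact (hgs x).symm
  · rintro ⟨n, hn, rfl⟩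
    exact ⟨(n : G), (Subgroup.mem_inf.1 (Subgroup.mem_subgroupOf.1 hn)).2, fun x => rfl⟩

section Helpers
variable {p : ℕ} [Fact p.Prime] [Finite G]

lemma fn_not_dvd (S : Sylow p G) {P : Subgroup G}
    (hP : P ≤ S) (hfn : FullyNormalized (S : Subgroup G) P) :
    ¬ p ∣ (((Subgroup.normalizer (P : Set G)) ⊓ (S : Subgroup G)).subgroupOf (Subgroup.normalizer (P : Set G))).index := by
  set N : Subgroup G := (Subgroup.normalizer (P : Set G)) ⊓ (S : Subgroup G) with hNdef
  have hNpg : IsPGroup p N := S.2.to_le inf_le_right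
  have hN'pg : IsPGroup p (N.subgroupOf (Subgroup.normalizer (P : Set G))) :=
    hNpg.of_equiv (Subgroup.subgroupOfEquivOfLe inf_le_left).symm
  obtain ⟨T', hT'⟩ := hN'pg.exists_le_sylow
  set T : Subgroup G := (T' : Subgroup ↥(Subgroup.normalizer (P : Set G))).map (Subgroup.normalizer (P : Set G)).subtype with hTdef
  have hTnorm : T ≤ (Subgroup.normalizer (P : Set G)) := by
    rintro y ⟨x, _, rfl⟩; exact x.2
  have hNT : N ≤ T := by
    intro n hn
    exact ⟨⟨n, (Subgroup.mem_inf.1 hn).1⟩, hT' (Subgroup.mem_subgroupOf.2 hn), rfl⟩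
  have hTpg : IsPGroup p T := T'.2.map _
  obtain ⟨R, hR⟩ := hTpg.exists_le_sylow
  obtain ⟨g, hg⟩ := MulAction.exists_smul_eq G R S
  have hconj : ∀ x ∈ (R : Subgroup G), g * x * g⁻¹ ∈ (S : Subgroup G) := by
    intro x hx
    have h1 : g * x * g⁻¹ ∈ (g • R : Sylow p G) := by
      rw [mem_smul_sylow]
      have : g⁻¹ * (g * x * g⁻¹) * g = x := by group
      rw [this]; exact hx
    rw [hg] at h1; exact h1
  set Q : Subgroup G := conjSub g P with hQdef
  have hPN : P ≤ N := le_inf Subgroup.le_normalizer hP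
  have hQS : Q ≤ S := by
    rintro y hy
    obtain ⟨x, hx, rfl⟩ := mem_conjSub.1 hy
    exact hconj x (hR (hNT (hPN hx)))
  have hTQ : conjSub g T ≤ (Subgroup.normalizer (Q : Set G)) ⊓ (S : Subgroup G) := by
    rintro y hy
    obtain ⟨x, hx, rfl⟩ := mem_conjSub.1 hy
    refine Subgroup.mem_inf.2 ⟨?_, hconj x (hR hx)⟩
    rw [hQdef, normalizer_conjSub]
    exact conjSub_mem (hTnorm hx)
  have c1 : Nat.card T ≤ Nat.card N := by
    calc Nat.card ↥T = Nat.card ↥(conjSub g T) := (card_conjSub g T).symm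
    _ ≤ Nat.card ↥((Subgroup.normalizer (Q : Set G)) ⊓ (S : Subgroup G)) := Subgroup.card_le_of_le hTQ
    _ ≤ Nat.card N := hfn Q hQS ⟨g, rfl⟩
  have hNeqT : N = T := Subgroup.eq_of_le_of_card_ge hNT c1
  have hsub : N.subgroupOf (Subgroup.normalizer (P : Set G)) = T' := by
    rw [hNeqT, hTdef]
    exact Subgroup.comap_map_eq_self_of_injective (Subgroup.normalizer (P : Set G)).subtype_injective _
  rw [hsub]
  exact T'.not_dvd_index

lemma fc_not_dvd (S : Sylow p G) {Q : Subgroup G}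
    (hQ : Q ≤ S) (hfc : FullyCentralized (S : Subgroup G) Q) :
    ¬ p ∣ ((Subgroup.centralizer (Q : Set G) ⊓ (S : Subgroup G)).subgroupOf
      (Subgroup.centralizer (Q : Set G))).index := by
  set CG : Subgroup G := Subgroup.centralizer (Q : Set G) with hCGdef
  set C : Subgroup G := CG ⊓ (S : Subgroup G) with hCdef
  have hCpg : IsPGroup p C := S.2.to_le inf_le_right
  have hC'pg : IsPGroup p (C.subgroupOf CG) :=
    hCpg.of_equiv (Subgroup.subgroupOfEquivOfLe inf_le_left).symm
  obtain ⟨T', hT'⟩ := hC'pg.exists_le_sylow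
  set T : Subgroup G := (T' : Subgroup ↥CG).map CG.subtype with hTdef
  have hTC : T ≤ CG := by rintro y ⟨x, _, rfl⟩; exact x.2
  have hCT : C ≤ T := by
    intro n hn
    exact ⟨⟨n, (Subgroup.mem_inf.1 hn).1⟩, hT' (Subgroup.mem_subgroupOf.2 hn), rfl⟩
  have hTpg : IsPGroup p T := T'.2.map _
  have hQpg : IsPGroup p Q := S.2.to_le hQ
  have hQTn : Q ≤ (Subgroup.normalizer (T : Set G)) := by
    intro q hq
    apply mem_normalizer_of_conj
    intro t ht
    have hcomm : q * t = t * q := (mem_centralizer_iff).1 (hTC ht) q hq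
    have : q * t * q⁻¹ = t := by rw [hcomm]; group
    rw [this]; exact ht
  have hQTpg : IsPGroup p (Q ⊔ T : Subgroup G) := hQpg.to_sup_of_normal_right' hTpg hQTn
  obtain ⟨R, hR⟩ := hQTpg.exists_le_sylow
  obtain ⟨g, hg⟩ := MulAction.exists_smul_eq G R S
  have hconj : ∀ x ∈ (R : Subgroup G), g * x * g⁻¹ ∈ (S : Subgroup G) := by
    intro x hx
    have h1 : g * x * g⁻¹ ∈ (g • R : Sylow p G) := by
      rw [mem_smul_sylow]
      have : g⁻¹ * (g * x * g⁻¹) * g = x := by group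
      rw [this]; exact hx
    rw [hg] at h1; exact h1
  set Q₁ : Subgroup G := conjSub g Q with hQ₁def
  have hQ₁S : Q₁ ≤ S := by
    rintro y hy
    obtain ⟨x, hx, rfl⟩ := mem_conjSub.1 hy
    exact hconj x (hR ((le_sup_left : Q ≤ Q ⊔ T) hx))
  have hTQ₁ : conjSub g T ≤ Subgroup.centralizer (Q₁ : Set G) ⊓ (S : Subgroup G) := by
    rintro y hy
    obtain ⟨x, hx, rfl⟩ := mem_conjSub.1 hy
    refine Subgroup.mem_inf.2 ⟨?_, hconj x (hR ((le_sup_right : T ≤ Q ⊔ T) hx))⟩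
    rw [hQ₁def, centralizer_conjSub]
    exact conjSub_mem (hTC hx)
  have c1 : Nat.card T ≤ Nat.card C := by
    calc Nat.card ↥T = Nat.card ↥(conjSub g T) := (card_conjSub g T).symm
    _ ≤ Nat.card ↥(Subgroup.centralizer (Q₁ : Set G) ⊓ (S : Subgroup G)) :=
        Subgroup.card_le_of_le hTQ₁
    _ ≤ Nat.card C := hfc Q₁ hQ₁S ⟨g, rfl⟩
  have hCeqT : C = T := Subgroup.eq_of_le_of_card_ge hCT c1
  have hsub : C.subgroupOf CG = T' := by
    rw [hCeqT, hTdef]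
    exact Subgroup.comap_map_eq_self_of_injective CG.subtype_injective _
  rw [hsub]
  exact T'.not_dvd_index

lemma autS_relIndex (S : Sylow p G) {P : Subgroup G} (hP : P ≤ S)
    (hfn : FullyNormalized (S : Subgroup G) P) :
    ¬ p ∣ ((autS (S : Subgroup G) P).subgroupOf (autF P)).index := by
  set θ := P.normalizerMonoidHom with hθ
  set H := ((Subgroup.normalizer (P : Set G)) ⊓ (S : Subgroup G)).subgroupOf (Subgroup.normalizer (P : Set G)) with hH
  have h1 : autF P = θ.range := autF_eq_range P
  have h2 : autS (S : Subgroup G) P = Subgroup.map θ H := autS_eq_map _ _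
  intro hdvd
  have e0 : ((autS (S : Subgroup G) P).subgroupOf (autF P)).index
      = (Subgroup.map θ H).relIndex θ.range := by rw [h1, h2]; rfl
  have e1 : (Subgroup.map θ H).relIndex θ.range * θ.range.index = (Subgroup.map θ H).index :=
    Subgroup.relIndex_mul_index (Subgroup.map_le_range θ H)
  have e2 : (Subgroup.map θ H).index = (H ⊔ θ.ker).index * θ.range.index :=
    Subgroup.index_map (H := H) θ
  have hr0 : θ.range.index ≠ 0 := Subgroup.index_ne_zero_of_finite
  have e3 : (Subgroup.map θ H).relIndex θ.range = (H ⊔ θ.ker).index :=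
    Nat.eq_of_mul_eq_mul_right (Nat.pos_of_ne_zero hr0) (e1.trans e2)
  have e4 : (H ⊔ θ.ker).index ∣ H.index := Subgroup.index_dvd_of_le le_sup_left
  rw [e0, e3] at hdvd
  exact fn_not_dvd S hP hfn (hdvd.trans e4)

lemma autS_pgroup (S : Sylow p G) (P : Subgroup G) :
    IsPGroup p ↥(autS (S : Subgroup G) P) := by
  intro f
  obtain ⟨s, hs, hconj⟩ := f.2
  obtain ⟨k, hk⟩ := S.2 ⟨s, hs⟩
  have hs1 : s ^ (p ^ k) = 1 := by
    have := congrArg (fun z : ↥(S : Subgroup G) => (z : G)) hk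
    simpa using this
  refine ⟨k, ?_⟩
  apply Subtype.ext
  have hcoe : ((f ^ p ^ k : ↥(autS (S : Subgroup G) P)) : MulAut ↥P)
      = ((f : MulAut ↥P) ^ p ^ k) := rfl
  rw [hcoe]
  show ((f : MulAut ↥P) ^ p ^ k) = 1
  apply MulEquiv.ext
  intro x
  apply Subtype.ext
  rw [pow_apply_of_conj hconj (p ^ k) x, hs1]
  simp

lemma fn_fc (S : Sylow p G) {P : Subgroup G} (hP : P ≤ S)
    (hfn : FullyNormalized (S : Subgroup G) P) :
    FullyCentralized (S : Subgroup G) P := by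
  intro Q hQ hconj
  obtain ⟨g, hg⟩ := hconj
  have hH : IsPGroup p (((Subgroup.normalizer (P : Set G)) ⊓ (S : Subgroup G)).subgroupOf (Subgroup.normalizer (P : Set G))) :=
    (S.2.to_le inf_le_right).of_equiv (Subgroup.subgroupOfEquivOfLe inf_le_left).symm
  have hHi := fn_not_dvd S hP hfn
  set A : Subgroup G := Subgroup.centralizer (Q : Set G) ⊓ (S : Subgroup G) with hAdef
  have hAQn : A ≤ (Subgroup.normalizer (Q : Set G)) := le_trans inf_le_left (centralizer_le_normalizer' Q)
  have hQP : conjSub g⁻¹ Q = P := by rw [← hg, conjSub_inv_conjSub]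
  set X : Subgroup G := conjSub g⁻¹ A with hXdef
  have hXn : X ≤ (Subgroup.normalizer (P : Set G)) := by
    rw [← hQP, normalizer_conjSub]
    exact conjSub_mono hAQn
  have hXpg : IsPGroup p X := isPGroup_conjSub (S.2.to_le inf_le_right)
  have hX'pg : IsPGroup p (X.subgroupOf (Subgroup.normalizer (P : Set G))) :=
    hXpg.of_equiv (Subgroup.subgroupOfEquivOfLe hXn).symm
  obtain ⟨k, hk⟩ := exists_conj_le hH hHi hX'pg
  set c : G := (k : G) * g⁻¹ with hcdef
  have hknor : (k : G) ∈ (Subgroup.normalizer (P : Set G)) := k.2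
  have hmain : conjSub c A ≤ Subgroup.centralizer (P : Set G) ⊓ (S : Subgroup G) := by
    rintro y' hy'
    obtain ⟨y, hy, rfl⟩ := mem_conjSub.1 hy'
    have hxX : g⁻¹ * y * g ∈ X := by
      have := conjSub_mem (g := g⁻¹) hy
      simpa using this
    have hxn : g⁻¹ * y * g ∈ (Subgroup.normalizer (P : Set G)) := hXn hxX
    have h1 : (⟨g⁻¹ * y * g, hxn⟩ : ↥(Subgroup.normalizer (P : Set G))) ∈ X.subgroupOf (Subgroup.normalizer (P : Set G)) :=
      Subgroup.mem_subgroupOf.2 hxX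
    have h2 := hk _ h1
    rw [Subgroup.mem_subgroupOf] at h2
    have h2' : (k : G) * (g⁻¹ * y * g) * (k : G)⁻¹ ∈ (Subgroup.normalizer (P : Set G)) ⊓ (S : Subgroup G) := by
      simpa using h2
    have hcyc : c * y * c⁻¹ = (k : G) * (g⁻¹ * y * g) * (k : G)⁻¹ := by
      rw [hcdef]; group
    refine Subgroup.mem_inf.2 ⟨?_, ?_⟩
    · have hyC : y ∈ Subgroup.centralizer (Q : Set G) := (Subgroup.mem_inf.1 hy).1
      have hmem : c * y * c⁻¹ ∈ conjSub c (Subgroup.centralizer (Q : Set G)) := conjSub_mem hyC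
      rw [← centralizer_conjSub] at hmem
      have hcQ : conjSub c Q = P := by
        rw [hcdef, ← conjSub_conjSub, hQP, conjSub_eq_self hknor]
      rw [hcQ] at hmem
      exact hmem
    · rw [hcyc]
      exact (Subgroup.mem_inf.1 h2').2
  calc Nat.card ↥A = Nat.card ↥(conjSub c A) := (card_conjSub c A).symm
  _ ≤ Nat.card ↥(Subgroup.centralizer (P : Set G) ⊓ (S : Subgroup G)) :=
      Subgroup.card_le_of_le hmain

lemma axiomII (S : Sylow p G) (P : Subgroup G) (g : G) (hP : P ≤ S)
    (hQS : conjSub g P ≤ S)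
    (hfc : FullyCentralized (S : Subgroup G) (conjSub g P)) :
    ∃ g' : G, (∀ n ∈ Nphi (S : Subgroup G) P g, g' * n * g'⁻¹ ∈ (S : Subgroup G)) ∧
      ∀ x ∈ P, g' * x * g'⁻¹ = g * x * g⁻¹ := by
  set Q : Subgroup G := conjSub g P with hQdef
  set CG : Subgroup G := Subgroup.centralizer (Q : Set G) with hCGdef
  set NSQ : Subgroup G := (Subgroup.normalizer (Q : Set G)) ⊓ (S : Subgroup G) with hNSQdef
  have hCGL : CG ≤ (Subgroup.normalizer (Q : Set G)) := centralizer_le_normalizer' Q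
  -- the subgroup with carrier Nphi
  set Nsub : Subgroup G :=
    { carrier := Nphi (S : Subgroup G) P g
      one_mem' := ⟨((S : Subgroup G) ⊓ (Subgroup.normalizer (P : Set G))).one_mem, 1, (S : Subgroup G).one_mem,
        by intro x hx; group⟩
      mul_mem' := by
        rintro a b ⟨haSN, s₁, hs₁, h₁⟩ ⟨hbSN, s₂, hs₂, h₂⟩
        refine ⟨mul_mem haSN hbSN, s₁ * s₂, mul_mem hs₁ hs₂, ?_⟩
        intro x hx
        have hbx : b * x * b⁻¹ ∈ P :=
          (Subgroup.mem_normalizer_iff.1 (Subgroup.mem_inf.1 hbSN).2 x).1 hx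
        have e1 := h₁ (b * x * b⁻¹) hbx
        have e2 := h₂ x hx
        calc g * (a * b * x * (a * b)⁻¹) * g⁻¹
            = g * (a * (b * x * b⁻¹) * a⁻¹) * g⁻¹ := by group
        _ = s₁ * (g * (b * x * b⁻¹) * g⁻¹) * s₁⁻¹ := e1
        _ = s₁ * (s₂ * (g * x * g⁻¹) * s₂⁻¹) * s₁⁻¹ := by rw [e2]
        _ = (s₁ * s₂) * (g * x * g⁻¹) * (s₁ * s₂)⁻¹ := by group
      inv_mem' := by
        rintro a ⟨haSN, s, hs, h⟩
        refine ⟨inv_mem haSN, s⁻¹, inv_mem hs, ?_⟩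
        intro x hx
        have hax : a⁻¹ * x * a ∈ P := by
          have := (Subgroup.mem_normalizer_iff.1
            (inv_mem (Subgroup.mem_inf.1 haSN).2) x).1 hx
          simpa using this
        have e1 := h (a⁻¹ * x * a) hax
        have e1' : g * x * g⁻¹ = s * (g * (a⁻¹ * x * a) * g⁻¹) * s⁻¹ := by
          have h2 : a * (a⁻¹ * x * a) * a⁻¹ = x := by group
          calc g * x * g⁻¹ = g * (a * (a⁻¹ * x * a) * a⁻¹) * g⁻¹ := by rw [h2]
          _ = s * (g * (a⁻¹ * x * a) * g⁻¹) * s⁻¹ := e1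
        have e2 : s⁻¹ * (g * x * g⁻¹) * s = g * (a⁻¹ * x * a) * g⁻¹ := by
          rw [e1']; group
        simp only [inv_inv]
        exact e2.symm } with hNsubdef
  have hNS : Nsub ≤ (S : Subgroup G) := fun n hn => (Subgroup.mem_inf.1 hn.1).1
  have hNnor : Nsub ≤ (Subgroup.normalizer (P : Set G)) := fun n hn => (Subgroup.mem_inf.1 hn.1).2
  set X : Subgroup G := conjSub g Nsub with hXdef
  have hXpg : IsPGroup p X := isPGroup_conjSub (S.2.to_le hNS)
  have hXL : X ≤ (Subgroup.normalizer (Q : Set G)) := by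
    rw [hQdef, normalizer_conjSub]
    exact conjSub_mono hNnor
  -- subgroups of ↥(Subgroup.normalizer (Q : Set G))
  set NS' : Subgroup ↥(Subgroup.normalizer (Q : Set G)) := NSQ.subgroupOf (Subgroup.normalizer (Q : Set G)) with hNS'def
  set C' : Subgroup ↥(Subgroup.normalizer (Q : Set G)) := CG.subgroupOf (Subgroup.normalizer (Q : Set G)) with hC'def
  set X' : Subgroup ↥(Subgroup.normalizer (Q : Set G)) := X.subgroupOf (Subgroup.normalizer (Q : Set G)) with hX'def
  haveI hC'norm : C'.Normal := by
    constructor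
    intro c hc n
    rw [hC'def, Subgroup.mem_subgroupOf] at hc ⊢
    rw [hCGdef, Subgroup.mem_centralizer_iff] at hc ⊢
    intro q hq
    have hq' : (n : G)⁻¹ * q * (n : G) ∈ Q := by
      have := (Subgroup.mem_normalizer_iff.1 ((Subgroup.normalizer (Q : Set G)).inv_mem n.2) q).1 hq
      simpa using this
    have hcomm : ((n : G)⁻¹ * q * (n : G)) * (c : G) = (c : G) * ((n : G)⁻¹ * q * (n : G)) :=
      hc _ hq'
    have hco : ((n * c * n⁻¹ : ↥(Subgroup.normalizer (Q : Set G))) : G) = (n : G) * (c : G) * (n : G)⁻¹ := by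
      push_cast; ring_nf
    rw [hco]
    calc q * ((n : G) * (c : G) * (n : G)⁻¹)
        = (n : G) * (((n : G)⁻¹ * q * (n : G)) * (c : G)) * (n : G)⁻¹ := by group
    _ = (n : G) * ((c : G) * ((n : G)⁻¹ * q * (n : G))) * (n : G)⁻¹ := by rw [hcomm]
    _ = (n : G) * (c : G) * (n : G)⁻¹ * q := by group
  -- index computation
  have hQle : Q ≤ S := hQS
  have hfcd := fc_not_dvd S hQle hfc
  have hNSQC : NSQ ⊓ CG = CG ⊓ (S : Subgroup G) := by
    apply le_antisymm
    · intro x hx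
      exact Subgroup.mem_inf.2
        ⟨(Subgroup.mem_inf.1 hx).2, (Subgroup.mem_inf.1 (Subgroup.mem_inf.1 hx).1).2⟩
    · intro x hx
      exact Subgroup.mem_inf.2
        ⟨Subgroup.mem_inf.2 ⟨hCGL (Subgroup.mem_inf.1 hx).1, (Subgroup.mem_inf.1 hx).2⟩,
          (Subgroup.mem_inf.1 hx).1⟩
  have hA : NS' ⊓ C' = (CG ⊓ (S : Subgroup G)).subgroupOf (Subgroup.normalizer (Q : Set G)) := by
    rw [← hNSQC]
    ext x
    simp [hNS'def, hC'def, Subgroup.mem_subgroupOf, Subgroup.mem_inf]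
  have hpos : (NS' ⊓ C').relIndex NS' ≠ 0 := Subgroup.index_ne_zero_of_finite
  have r1 := Subgroup.relIndex_mul_relIndex (NS' ⊓ C') NS' (NS' ⊔ C') inf_le_left le_sup_left
  have r2 := Subgroup.relIndex_mul_relIndex (NS' ⊓ C') C' (NS' ⊔ C') inf_le_right le_sup_right
  have r3 : C'.relIndex (NS' ⊔ C') = C'.relIndex NS' := Subgroup.relIndex_sup_right NS' C'
  have r4 : (NS' ⊓ C').relIndex NS' = C'.relIndex NS' := by
    rw [inf_comm]
    exact Subgroup.inf_relIndex_right C' NS' 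
  have key : NS'.relIndex (NS' ⊔ C') = (NS' ⊓ C').relIndex C' := by
    have e : (NS' ⊓ C').relIndex NS' * NS'.relIndex (NS' ⊔ C')
        = (NS' ⊓ C').relIndex NS' * (NS' ⊓ C').relIndex C' := by
      rw [r1, ← r2, r3, ← r4, mul_comm]
    exact Nat.eq_of_mul_eq_mul_left (Nat.pos_of_ne_zero hpos) e
  have hndvd : ¬ p ∣ NS'.relIndex (NS' ⊔ C') := by
    rw [key, hA, Subgroup.relIndex_subgroupOf hCGL]
    exact hfcd
  -- Sylow machinery inside K'
  set K' : Subgroup ↥(Subgroup.normalizer (Q : Set G)) := NS' ⊔ C' with hK'def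
  set H₂ : Subgroup ↥K' := NS'.subgroupOf K' with hH₂def
  have hNS'pg : IsPGroup p NS' :=
    (S.2.to_le inf_le_right).of_equiv (Subgroup.subgroupOfEquivOfLe inf_le_left).symm
  have hH₂pg : IsPGroup p H₂ :=
    hNS'pg.of_equiv (Subgroup.subgroupOfEquivOfLe le_sup_left).symm
  have hH₂i : ¬ p ∣ H₂.index := hndvd
  have hX'le : X' ≤ K' := by
    intro x hx
    rw [hX'def, Subgroup.mem_subgroupOf] at hx
    obtain ⟨n, hn, hconjn⟩ := mem_conjSub.1 hx
    obtain ⟨hnSN, s, hsS, hns⟩ := hn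
    have hnP : n ∈ (Subgroup.normalizer (P : Set G)) := (Subgroup.mem_inf.1 hnSN).2
    -- s normalizes Q
    have hsQn : s ∈ (Subgroup.normalizer (Q : Set G)) := by
      apply mem_normalizer_of_conj
      intro q hq
      obtain ⟨y, hy, rfl⟩ := mem_conjSub.1 hq
      have := hns y hy
      rw [← this]
      exact conjSub_mem ((Subgroup.mem_normalizer_iff.1 hnP y).1 hy)
    -- s⁻¹ * (x:G) centralizes Q
    have hcent : s⁻¹ * (x : G) ∈ CG := by
      rw [hCGdef, Subgroup.mem_centralizer_iff]
      intro q hq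
      obtain ⟨y, hy, rfl⟩ := mem_conjSub.1 hq
      have h1 := hns y hy
      -- h1 : g * (n*y*n⁻¹) * g⁻¹ = s * (g*y*g⁻¹) * s⁻¹
      -- (x:G) = g*n*g⁻¹
      have h2 : (x : G) * (g * y * g⁻¹) * (x : G)⁻¹ = s * (g * y * g⁻¹) * s⁻¹ := by
        rw [← hconjn, ← h1]; group
      calc (g * y * g⁻¹) * (s⁻¹ * (x : G))
          = s⁻¹ * (s * (g * y * g⁻¹) * s⁻¹) * (x : G) := by group
      _ = s⁻¹ * ((x : G) * (g * y * g⁻¹) * (x : G)⁻¹) * (x : G) := by rw [h2]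
      _ = (s⁻¹ * (x : G)) * (g * y * g⁻¹) := by group
    have hsL : s ∈ (Subgroup.normalizer (Q : Set G)) := hsQn
    have hcL : s⁻¹ * (x : G) ∈ (Subgroup.normalizer (Q : Set G)) := hCGL hcent
    have hx' : x = (⟨s, hsL⟩ : ↥(Subgroup.normalizer (Q : Set G))) * ⟨s⁻¹ * (x : G), hcL⟩ := by
      apply Subtype.ext
      push_cast
      group
    rw [hx']
    apply mul_mem
    · exact le_sup_left (α := Subgroup ↥(Subgroup.normalizer (Q : Set G)))
        (Subgroup.mem_subgroupOf.2 (Subgroup.mem_inf.2 ⟨hsQn, hsS⟩))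
    · exact le_sup_right (α := Subgroup ↥(Subgroup.normalizer (Q : Set G)))
        (Subgroup.mem_subgroupOf.2 hcent)
  have hX'pg : IsPGroup p X' := hXpg.of_equiv (Subgroup.subgroupOfEquivOfLe hXL).symm
  have hX₂pg : IsPGroup p (X'.subgroupOf K') :=
    hX'pg.of_equiv (Subgroup.subgroupOfEquivOfLe hX'le).symm
  obtain ⟨k, hk⟩ := exists_conj_le hH₂pg hH₂i hX₂pg
  -- decompose k
  have hkmem : ((k : ↥K') : ↥(Subgroup.normalizer (Q : Set G))) ∈ (NS' ⊔ C' : Subgroup ↥(Subgroup.normalizer (Q : Set G))) :=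
    (k : ↥K').2
  have hkmem' : ((k : ↥K') : ↥(Subgroup.normalizer (Q : Set G))) ∈ ((NS' : Set ↥(Subgroup.normalizer (Q : Set G))) * (C' : Set ↥(Subgroup.normalizer (Q : Set G)))) := by
    rw [← Subgroup.mul_normal NS' C']
    exact hkmem
  obtain ⟨s', hs', c', hc', heq⟩ := hkmem'

  set s₀ : G := ((s' : ↥(Subgroup.normalizer (Q : Set G))) : G) with hs₀def
  set c₀ : G := ((c' : ↥(Subgroup.normalizer (Q : Set G))) : G) with hc₀def
  have hs₀ : s₀ ∈ NSQ := Subgroup.mem_subgroupOf.1 hs'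
  have hc₀ : c₀ ∈ CG := Subgroup.mem_subgroupOf.1 hc'
  have hs₀S : s₀ ∈ (S : Subgroup G) := (Subgroup.mem_inf.1 hs₀).2
  set k₀ : G := (((k : ↥K') : ↥(Subgroup.normalizer (Q : Set G))) : G) with hk₀def
  have hk₀eq : s₀ * c₀ = k₀ := by
    have := congrArg (fun z : ↥(Subgroup.normalizer (Q : Set G)) => (z : G)) heq
    simpa using this
  refine ⟨c₀ * g, ?_, ?_⟩
  · -- first condition
    intro n hn
    have hnN : n ∈ Nsub := hn
    have hXmem : g * n * g⁻¹ ∈ X := conjSub_mem hnN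
    have hh₀L : g * n * g⁻¹ ∈ (Subgroup.normalizer (Q : Set G)) := hXL hXmem
    have hx1 : (⟨g * n * g⁻¹, hh₀L⟩ : ↥(Subgroup.normalizer (Q : Set G))) ∈ X' :=
      Subgroup.mem_subgroupOf.2 hXmem
    have hx2 : (⟨⟨g * n * g⁻¹, hh₀L⟩, hX'le hx1⟩ : ↥K') ∈ X'.subgroupOf K' :=
      Subgroup.mem_subgroupOf.2 hx1
    have h3 := hk _ hx2
    rw [hH₂def, Subgroup.mem_subgroupOf] at h3
    rw [hNS'def, Subgroup.mem_subgroupOf] at h3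
    have h4 : k₀ * (g * n * g⁻¹) * k₀⁻¹ ∈ NSQ := by
      have hco : ((((k * ⟨⟨g * n * g⁻¹, hh₀L⟩, hX'le hx1⟩ * k⁻¹ : ↥K') : ↥(Subgroup.normalizer (Q : Set G)))) : G)
          = k₀ * (g * n * g⁻¹) * k₀⁻¹ := by
        push_cast
        rfl
      rw [← hco]
      exact h3
    have h5 : k₀ * (g * n * g⁻¹) * k₀⁻¹ ∈ (S : Subgroup G) := (Subgroup.mem_inf.1 h4).2
    have h6 : (c₀ * g) * n * (c₀ * g)⁻¹ = s₀⁻¹ * (k₀ * (g * n * g⁻¹) * k₀⁻¹) * s₀ := by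
      rw [← hk₀eq]
      group
    rw [h6]
    exact mul_mem (mul_mem (inv_mem hs₀S) h5) hs₀S
  · -- second condition
    intro x hx
    have hqQ : g * x * g⁻¹ ∈ Q := conjSub_mem hx
    have hcomm : (g * x * g⁻¹) * c₀ = c₀ * (g * x * g⁻¹) :=
      (Subgroup.mem_centralizer_iff.1 hc₀) _ hqQ
    calc (c₀ * g) * x * (c₀ * g)⁻¹ = c₀ * (g * x * g⁻¹) * c₀⁻¹ := by group
    _ = ((g * x * g⁻¹) * c₀) * c₀⁻¹ := by rw [hcomm]
    _ = g * x * g⁻¹ := by group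

end Helpers

/-- For a finite group `G` with Sylow `p`-subgroup `S`, the fusion
category `F_S(G)` (morphisms = homomorphisms induced by conjugation in `G`) is a
saturated fusion system over `S`:  (1) `Hom_S(P,Q) ⊆ Hom_F(P,Q) ⊆ Inj(P,Q)`;
(2) every morphism factors as an `F`-isomorphism followed by an inclusion;
(I) every fully normalized `P ≤ S` is fully centralized and `Aut_S(P)` is a Sylow
`p`-subgroup of `Aut_F(P)`;  (II) every `φ = c_g : P → S` with `gPg⁻¹` fully centralized
extends to `N_φ`. -/
theorem fusion_system_of_finite_group_is_saturated
    (G : Type) [Group G] [Finite G] (p : ℕ) [Fact p.Prime] (S : Sylow p G) :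
    -- axiom (1): Hom_S ⊆ Hom_F ⊆ Inj
    (∀ P Q : Subgroup G, P ≤ S → Q ≤ S → ∀ φ : ↥P →* ↥Q,
      (IsSubConjMor (S : Subgroup G) P Q φ → IsFusionMor P Q φ) ∧
      (IsFusionMor P Q φ → Function.Injective φ)) ∧
    -- axiom (2): factorization as isomorphism followed by inclusion
    (∀ P Q : Subgroup G, P ≤ S → Q ≤ S → ∀ φ : ↥P →* ↥Q, IsFusionMor P Q φ →
      ∃ (R : Subgroup G) (hR : R ≤ Q) (ψ : ↥P →* ↥R),
        IsFusionMor P R ψ ∧ Function.Bijective ψ ∧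
          φ = (Subgroup.inclusion hR).comp ψ) ∧
    -- saturation axiom (I)
    (∀ P : Subgroup G, P ≤ S → FullyNormalized (S : Subgroup G) P →
      FullyCentralized (S : Subgroup G) P ∧
        IsPGroup p ↥(autS (S : Subgroup G) P) ∧
        ¬ p ∣ ((autS (S : Subgroup G) P).subgroupOf (autF P)).index) ∧
    -- saturation axiom (II)
    (∀ (P : Subgroup G) (g : G), P ≤ S → conjSub g P ≤ S →
      FullyCentralized (S : Subgroup G) (conjSub g P) →
      ∃ g' : G, (∀ n ∈ Nphi (S : Subgroup G) P g, g' * n * g'⁻¹ ∈ (S : Subgroup G)) ∧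
        ∀ x ∈ P, g' * x * g'⁻¹ = g * x * g⁻¹) := by
  refine ⟨?_, ?_, ?_, ?_⟩
  · -- axiom 1
    intro P Q hPS hQS φ
    constructor
    · rintro ⟨g, hgS, h⟩
      exact ⟨g, h⟩
    · rintro ⟨g, h⟩ x y hxy
      have h1 : ((φ x : ↥Q) : G) = ((φ y : ↥Q) : G) := by rw [hxy]
      rw [h x, h y] at h1
      exact Subtype.ext (mul_left_cancel (mul_right_cancel h1))
  · -- axiom 2
    rintro P Q hPS hQS φ ⟨g, hg⟩
    have hRQ : conjSub g P ≤ Q := by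
      rintro y hy
      obtain ⟨x, hx, rfl⟩ := mem_conjSub.1 hy
      have h1 := hg ⟨x, hx⟩
      rw [← h1]
      exact (φ ⟨x, hx⟩).2
    refine ⟨conjSub g P, hRQ,
      { toFun := fun x => ⟨g * (x : G) * g⁻¹, conjSub_mem x.2⟩
        map_one' := by apply Subtype.ext; simp
        map_mul' := by intro x y; apply Subtype.ext; push_cast; group },
      ⟨g, fun x => rfl⟩, ⟨?_, ?_⟩, ?_⟩
    · intro x y hxy
      have h1 : g * (x : G) * g⁻¹ = g * (y : G) * g⁻¹ :=
        congrArg (fun z : ↥(conjSub g P) => (z : G)) hxy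
      exact Subtype.ext (mul_left_cancel (mul_right_cancel h1))
    · rintro ⟨y, hy⟩
      obtain ⟨x, hx, rfl⟩ := mem_conjSub.1 hy
      exact ⟨⟨x, hx⟩, rfl⟩
    · ext x
      rw [hg x]
      rfl
  · -- axiom I
    intro P hPS hfn
    exact ⟨fn_fc S hPS hfn, autS_pgroup S P, autS_relIndex S hPS hfn⟩
  · -- axiom II
    intro P g hPS hQS hfc
    exact axiomII S P g hPS hQS hfc
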